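/- If q = 1 and p > 1, then the extended Lorentz cone L = {(x,u) ∈ ℝ^p × ℝ : x ≥ |u|e} equals cone{(e,1), (e,−1), (e¹,0), …, (e^p,0)}, and no set of fewer than p + 2 vectors generates L (so the minimal number of generators of L is p + 2). If q = 1 and p = 1, then L = cone{(1,1), (1,−1)}. -/

import Mathlib

/-- The extended Lorentz cone with `q = 1`:
`L = {(x,u) ∈ ℝ^p × ℝ : x ≥ |u|e}`. -/
def extendedLorentzCone1 (p : ℕ) : Set (EuclideanSpace ℝ (Fin p) × ℝ) :=
  {z | ∀ i, |z.2| ≤ z.1 i}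

/-- The cone generated by finitely many vectors `v¹,…,v^k`. -/
def coneGen {V : Type*} [AddCommMonoid V] [Module ℝ V] {k : ℕ}
    (v : Fin k → V) : Set V :=
  {z | ∃ lam : Fin k → ℝ, (∀ i, 0 ≤ lam i) ∧ z = ∑ i, lam i • v i}

/-- The all-ones vector `e ∈ ℝ^p`. -/
noncomputable def onesVec (p : ℕ) : EuclideanSpace ℝ (Fin p) := WithLp.toLp 2 (fun _ => 1)

namespace Stmt4Aux

variable {p : ℕ}

lemma L_zero : (0 : EuclideanSpace ℝ (Fin p) × ℝ) ∈ extendedLorentzCone1 p := by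
  intro i; simp [extendedLorentzCone1]

lemma L_add {a b : EuclideanSpace ℝ (Fin p) × ℝ} (ha : a ∈ extendedLorentzCone1 p)
    (hb : b ∈ extendedLorentzCone1 p) : a + b ∈ extendedLorentzCone1 p := by
  intro i
  calc |(a + b).2| = |a.2 + b.2| := rfl
    _ ≤ |a.2| + |b.2| := abs_add_le _ _
    _ ≤ a.1 i + b.1 i := add_le_add (ha i) (hb i)
    _ = (a + b).1 i := rfl

lemma L_smul {c : ℝ} (hc : 0 ≤ c) {a : EuclideanSpace ℝ (Fin p) × ℝ}
    (ha : a ∈ extendedLorentzCone1 p) : c • a ∈ extendedLorentzCone1 p := by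
  intro i
  have h1 : |(c • a).2| = c * |a.2| := by simp [abs_mul, abs_of_nonneg hc]
  rw [h1]
  have h2 : (c • a).1 i = c * a.1 i := rfl
  rw [h2]
  exact mul_le_mul_of_nonneg_left (ha i) hc

lemma L_sum {ι : Type*} (s : Finset ι) (f : ι → EuclideanSpace ℝ (Fin p) × ℝ)
    (h : ∀ i ∈ s, f i ∈ extendedLorentzCone1 p) :
    ∑ i ∈ s, f i ∈ extendedLorentzCone1 p := by
  classical
  induction s using Finset.induction with
  | empty => simpa using L_zero
  | insert _ _ hx ih =>
    rw [Finset.sum_insert hx]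
    exact L_add (h _ (Finset.mem_insert_self _ _))
      (ih fun i hi => h i (Finset.mem_insert_of_mem hi))

lemma coneGen_subset_L {k : ℕ} {v : Fin k → EuclideanSpace ℝ (Fin p) × ℝ}
    (hv : ∀ i, v i ∈ extendedLorentzCone1 p) : coneGen v ⊆ extendedLorentzCone1 p := by
  rintro z ⟨lam, hlam, rfl⟩
  exact L_sum _ _ fun i _ => L_smul (hlam i) (hv i)

lemma mem_coneGen_self {k : ℕ} (w : Fin k → EuclideanSpace ℝ (Fin p) × ℝ)
    (i : Fin k) : w i ∈ coneGen w := by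
  classical
  refine ⟨fun j => if j = i then 1 else 0, fun j => by positivity, ?_⟩
  simp [ite_smul]

/-- The generating family. -/
noncomputable def G (p : ℕ) : Fin (2 + p) → EuclideanSpace ℝ (Fin p) × ℝ :=
  Fin.append ![(onesVec p, (1:ℝ)), (onesVec p, (-1:ℝ))]
    (fun i : Fin p => (EuclideanSpace.single i (1:ℝ), (0:ℝ)))

lemma G_snd (j0 : Fin 2) :
    (G p (Fin.castAdd p j0)).2 = if j0 = 0 then 1 else -1 := by
  rw [G, Fin.append_left]; fin_cases j0 <;> simp

lemma G_left (j0 : Fin 2) :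
    G p (Fin.castAdd p j0)
      = if j0 = 0 then (onesVec p, (1:ℝ)) else (onesVec p, (-1:ℝ)) := by
  rw [G, Fin.append_left]; fin_cases j0 <;> simp

lemma G_right (i : Fin p) :
    G p (Fin.natAdd 2 i) = (EuclideanSpace.single i (1:ℝ), (0:ℝ)) := by
  rw [G, Fin.append_right]

lemma G_mem_L (j : Fin (2 + p)) : G p j ∈ extendedLorentzCone1 p := by
  induction j using Fin.addCases with
  | left j =>
    rw [G_left]
    by_cases h0 : j = 0 <;> intro i <;> simp [h0, onesVec, extendedLorentzCone1]
  | right j =>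
    rw [G_right]
    intro i
    simp [EuclideanSpace.single_apply]
    positivity

lemma L_subset_coneGen (hp : 0 < p) : extendedLorentzCone1 p ⊆ coneGen (G p) := by
  intro z hz
  have hne : (Finset.univ : Finset (Fin p)).Nonempty := by
    have : Nonempty (Fin p) := Fin.pos_iff_nonempty.mp hp
    exact Finset.univ_nonempty
  set m : ℝ := Finset.univ.inf' hne (fun i => z.1 i) with hm
  have hmle : ∀ i, m ≤ z.1 i := fun i => Finset.inf'_le _ (Finset.mem_univ i)
  have hum : |z.2| ≤ m := by
    rw [hm, Finset.le_inf'_iff]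
    intro i _; exact hz i
  refine ⟨Fin.append ![(m + z.2)/2, (m - z.2)/2] (fun i => z.1 i - m), ?_, ?_⟩
  · intro j
    induction j using Fin.addCases with
    | left j =>
      have h1 := abs_le.mp hum
      fin_cases j <;> simp [Fin.append_left] <;> linarith [h1.1, h1.2]
    | right j =>
      simp only [Fin.append_right]
      linarith [hmle j]
  · rw [Fin.sum_univ_add]
    simp only [Fin.append_left, Fin.append_right, G, Fin.sum_univ_two]
    simp only [Matrix.cons_val_zero, Matrix.cons_val_one, Matrix.head_cons]
    apply Prod.ext
    · show z.1 = _
      ext i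
      simp only [Prod.fst_add, Prod.smul_fst, PiLp.add_apply, PiLp.smul_apply,
        onesVec, smul_eq_mul, mul_one, Prod.fst_sum]
      rw [WithLp.ofLp_sum, Finset.sum_apply]
      have : ∀ j : Fin p, ((z.1 j - m) • (EuclideanSpace.single j (1:ℝ))) i
          = if i = j then z.1 j - m else 0 := by
        intro j
        rw [PiLp.smul_apply, EuclideanSpace.single_apply]
        simp [mul_ite]
      rw [Finset.sum_congr rfl fun j _ => this j, Finset.sum_ite_eq Finset.univ i]
      simp; ring
    · show z.2 = _
      simp only [Prod.snd_add, Prod.smul_snd, smul_eq_mul, Prod.snd_sum]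
      simp
      ring

/-- Pairwise non-proportionality of the generators. -/
lemma G_ne_smul {j j' : Fin (2 + p)} {c : ℝ} (hc : 0 < c)
    (h : G p j = c • G p j') : j = j' := by
  have h2 : (G p j).2 = c * (G p j').2 := by rw [h]; rfl
  induction j using Fin.addCases with
  | left j0 =>
    induction j' using Fin.addCases with
    | left j0' =>
      rw [G_snd, G_snd] at h2
      have : j0 = j0' := by
        by_cases h0 : j0 = 0 <;> by_cases h0' : j0' = 0 <;>
          simp [h0, h0'] at h2 ⊢ <;> first
          | rfl
          | nlinarith
          | omega
      rw [this]
    | right i' =>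
      rw [G_snd] at h2
      rw [G_right] at h2
      simp only [mul_zero] at h2
      by_cases h0 : j0 = 0 <;> simp [h0] at h2
  | right i =>
    induction j' using Fin.addCases with
    | left j0' =>
      rw [G_right, G_snd] at h2
      by_cases h0' : j0' = 0 <;> simp [h0'] at h2 <;> nlinarith
    | right i' =>
      have hii : i = i' := by
        by_contra hne
        have h1 := congrFun (congrArg (fun v : EuclideanSpace ℝ (Fin p) × ℝ =>
          (v.1 : Fin p → ℝ)) h) i
        rw [G_right, G_right] at h1
        simp only at h1
        have h1' : EuclideanSpace.single i (1:ℝ) i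
            = c * (EuclideanSpace.single i' (1:ℝ) i) := h1
        rw [EuclideanSpace.single_apply, EuclideanSpace.single_apply] at h1'
        simp [hne] at h1'
      rw [hii]

lemma G_ne_zero (j : Fin (2 + p)) : G p j ≠ 0 := by
  induction j using Fin.addCases with
  | left j0 =>
    intro h
    have h2 : (G p (Fin.castAdd p j0)).2 = 0 := by rw [h]; rfl
    rw [G_snd] at h2
    by_cases h0 : j0 = 0 <;> simp [h0] at h2
  | right i =>
    intro h
    have h1 := congrFun (congrArg (fun v : EuclideanSpace ℝ (Fin p) × ℝ =>
      (v.1 : Fin p → ℝ)) h) i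
    rw [G_right] at h1
    simp only at h1
    have h1' : EuclideanSpace.single i (1:ℝ) i = (0 : EuclideanSpace ℝ (Fin p)) i := h1
    rw [EuclideanSpace.single_apply] at h1'
    simp at h1'

/-- Extremality predicate: every decomposition of `v` as a sum of two cone
elements consists of multiples of `v`. -/
def Extreme (p : ℕ) (v : EuclideanSpace ℝ (Fin p) × ℝ) : Prop :=
  ∀ a b : EuclideanSpace ℝ (Fin p) × ℝ, a ∈ extendedLorentzCone1 p →
    b ∈ extendedLorentzCone1 p → a + b = v →
    ∃ t : ℝ, 0 ≤ t ∧ a = t • v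

lemma extreme_plus (hp : 0 < p) : Extreme p (onesVec p, (1:ℝ)) := by
  rintro ⟨x, s⟩ ⟨y, t⟩ ha hb hab
  have h1 : x + y = onesVec p := congrArg Prod.fst hab
  have h2 : s + t = 1 := congrArg Prod.snd hab
  have hxy : ∀ i, x i + y i = 1 := by
    intro i
    have := congrFun (congrArg (fun v : EuclideanSpace ℝ (Fin p) => (v : Fin p → ℝ)) h1) i
    simpa [onesVec] using this
  obtain ⟨i0⟩ : Nonempty (Fin p) := Fin.pos_iff_nonempty.mp hp
  have key : ∀ i, x i = s ∧ 0 ≤ s := by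
    intro i
    have hxs : |s| ≤ x i := ha i
    have hyt : |t| ≤ y i := hb i
    have h3 : s + t ≤ |s| + |t| := add_le_add (le_abs_self s) (le_abs_self t)
    have h4 : |s| + |t| ≤ x i + y i := add_le_add hxs hyt
    have h5 : x i + y i = s + t := by rw [hxy i, h2]
    have habs : |s| = s := by
      cases abs_cases s with
      | inl h => exact h.1
      | inr h =>
        cases abs_cases t with
        | inl h' => nlinarith [abs_nonneg s, abs_nonneg t]
        | inr h' => nlinarith
    constructor
    · nlinarith [abs_nonneg t, le_abs_self t]
    · rw [← habs]; exact abs_nonneg s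
  refine ⟨s, (key i0).2, ?_⟩
  apply Prod.ext
  · ext i
    show x i = s • (onesVec p) i
    simp [onesVec, (key i).1]
  · show s = s • (1:ℝ); simp

lemma extreme_minus (hp : 0 < p) : Extreme p (onesVec p, (-1:ℝ)) := by
  rintro ⟨x, s⟩ ⟨y, t⟩ ha hb hab
  have h1 : x + y = onesVec p := congrArg Prod.fst hab
  have h2 : s + t = -1 := congrArg Prod.snd hab
  have hxy : ∀ i, x i + y i = 1 := by
    intro i
    have := congrFun (congrArg (fun v : EuclideanSpace ℝ (Fin p) => (v : Fin p → ℝ)) h1) i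
    simpa [onesVec] using this
  obtain ⟨i0⟩ : Nonempty (Fin p) := Fin.pos_iff_nonempty.mp hp
  have key : ∀ i, x i = -s ∧ s ≤ 0 := by
    intro i
    have hxs : |s| ≤ x i := ha i
    have hyt : |t| ≤ y i := hb i
    have h5 : x i + y i = -(s + t) := by rw [hxy i, h2]; ring
    have habs : |s| = -s := by
      cases abs_cases s with
      | inr h => exact h.1
      | inl h =>
        cases abs_cases t with
        | inl h' => nlinarith
        | inr h' => nlinarith
    constructor
    · nlinarith [neg_abs_le t, abs_nonneg t]
    · rw [← neg_nonneg, ← habs]; exact abs_nonneg s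
  refine ⟨-s, by linarith [(key i0).2], ?_⟩
  apply Prod.ext
  · ext i
    show x i = (-s) • (onesVec p) i
    simp [onesVec, (key i).1]
  · show s = (-s) • (-1:ℝ); simp

lemma extreme_single (hp1 : 1 < p) (i : Fin p) :
    Extreme p (EuclideanSpace.single i (1:ℝ), (0:ℝ)) := by
  rintro ⟨x, s⟩ ⟨y, t⟩ ha hb hab
  have h1 : x + y = EuclideanSpace.single i (1:ℝ) := congrArg Prod.fst hab
  have hxy : ∀ j, x j + y j = if j = i then 1 else 0 := by
    intro j
    have := congrFun (congrArg (fun v : EuclideanSpace ℝ (Fin p) => (v : Fin p → ℝ)) h1) j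
    simpa [EuclideanSpace.single_apply] using this
  haveI : Nontrivial (Fin p) := Fin.nontrivial_iff_two_le.mpr hp1
  obtain ⟨j0, hj0⟩ := exists_ne i
  have hx0 : ∀ j, j ≠ i → x j = 0 := by
    intro j hj
    have h := hxy j
    rw [if_neg hj] at h
    linarith [ha j, hb j, abs_nonneg s, abs_nonneg t]
  have hs0 : s = 0 := by
    have h : |s| ≤ x j0 := ha j0
    rw [hx0 j0 hj0] at h
    exact abs_eq_zero.mp (le_antisymm h (abs_nonneg s))
  have hxi : 0 ≤ x i := (abs_nonneg s).trans (ha i)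
  refine ⟨x i, hxi, ?_⟩
  apply Prod.ext
  · ext j
    show x j = ((x i) • (EuclideanSpace.single i (1:ℝ))) j
    rw [PiLp.smul_apply, EuclideanSpace.single_apply]
    by_cases hj : j = i
    · subst hj; simp
    · simp [hj, hx0 j hj]
  · show s = (x i) • (0:ℝ)
    simp [hs0]

lemma extreme_G (hp1 : 1 < p) (j : Fin (2 + p)) : Extreme p (G p j) := by
  induction j using Fin.addCases with
  | left j0 =>
    rw [G_left]
    by_cases h0 : j0 = 0
    · rw [if_pos h0]; exact extreme_plus (by omega)
    · rw [if_neg h0]; exact extreme_minus (by omega)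
  | right i =>
    rw [G_right]
    exact extreme_single hp1 i

/-- Minimality: fewer than `p + 2` vectors cannot generate the cone. -/
lemma not_gen (hp1 : 1 < p) (k : ℕ) (hk : k < p + 2)
    (w : Fin k → EuclideanSpace ℝ (Fin p) × ℝ)
    (heq : extendedLorentzCone1 p = coneGen w) : False := by
  classical
  have hwL : ∀ i, w i ∈ extendedLorentzCone1 p := fun i =>
    heq ▸ mem_coneGen_self w i
  have key : ∀ j : Fin (2 + p), ∃ i : Fin k, ∃ c : ℝ, 0 < c ∧ w i = c • G p j := by
    intro j
    have hGL : G p j ∈ coneGen w := heq ▸ G_mem_L j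
    obtain ⟨lam, hlam, hsum⟩ := hGL
    have hne : ∃ i, lam i • w i ≠ 0 := by
      by_contra hall
      push_neg at hall
      apply G_ne_zero j
      rw [hsum, Finset.sum_eq_zero fun i _ => hall i]
    obtain ⟨i, hi⟩ := hne
    have hsplit : lam i • w i + ∑ i' ∈ Finset.univ.erase i, lam i' • w i' = G p j :=
      (Finset.add_sum_erase Finset.univ (fun i => lam i • w i)
        (Finset.mem_univ i)).trans hsum.symm
    obtain ⟨t, ht0, hte⟩ := extreme_G hp1 j (lam i • w i)
      (∑ i' ∈ Finset.univ.erase i, lam i' • w i')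
      (L_smul (hlam i) (hwL i))
      (L_sum _ _ fun i' _ => L_smul (hlam i') (hwL i'))
      hsplit
    have htpos : 0 < t := by
      rcases lt_or_eq_of_le ht0 with h | h
      · exact h
      · exfalso; apply hi; rw [hte, ← h, zero_smul]
    have hlami : 0 < lam i := by
      rcases lt_or_eq_of_le (hlam i) with h | h
      · exact h
      · exfalso; apply hi; rw [← h, zero_smul]
    refine ⟨i, t / lam i, div_pos htpos hlami, ?_⟩
    have := congrArg (fun v => (lam i)⁻¹ • v) hte
    simp only [smul_smul, inv_mul_cancel₀ (ne_of_gt hlami), one_smul] at this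
    rw [this, div_eq_inv_mul]
  choose F c hc hwF using key
  have hinj : Function.Injective F := by
    intro j j' hjj
    have h1 : c j • G p j = c j' • G p j' := by
      rw [← hwF j, ← hwF j', hjj]
    have h2 : G p j = ((c j)⁻¹ * c j') • G p j' := by
      have := congrArg (fun v => (c j)⁻¹ • v) h1
      simpa only [smul_smul, inv_mul_cancel₀ (ne_of_gt (hc j)), one_smul] using this
    exact G_ne_smul (mul_pos (inv_pos.mpr (hc j)) (hc j')) h2
  have := Fintype.card_le_of_injective F hinj
  simp only [Fintype.card_fin] at this
  omega

/-- The case `p = 1`. -/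
lemma pone : extendedLorentzCone1 1
    = coneGen ![(onesVec 1, (1:ℝ)), (onesVec 1, (-1:ℝ))] := by
  apply Set.Subset.antisymm
  · intro z hz
    have h0 : |z.2| ≤ z.1 0 := hz 0
    have h1 := abs_le.mp h0
    refine ⟨![(z.1 0 + z.2)/2, (z.1 0 - z.2)/2], ?_, ?_⟩
    · intro j
      fin_cases j <;> simp <;> linarith [h1.1, h1.2]
    · rw [Fin.sum_univ_two]
      simp only [Matrix.cons_val_zero, Matrix.cons_val_one, Matrix.head_cons]
      apply Prod.ext
      · ext i
        have hi : i = 0 := Subsingleton.elim i 0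
        subst hi
        show z.1 0 = ((z.1 0 + z.2)/2) • (onesVec 1) 0 + ((z.1 0 - z.2)/2) • (onesVec 1) 0
        simp [onesVec]; ring
      · show z.2 = ((z.1 0 + z.2)/2) • (1:ℝ) + ((z.1 0 - z.2)/2) • (-1:ℝ)
        simp; ring
  · apply coneGen_subset_L
    intro i
    fin_cases i <;> intro j <;> simp [onesVec, extendedLorentzCone1]

end Stmt4Aux

/-- For `q = 1, p > 1`, the extended Lorentz cone is generated by the `p + 2`
vectors `(e,1), (e,−1), (e¹,0), …, (e^p,0)` and cannot be generated by fewer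
than `p + 2` vectors; for `q = 1, p = 1` it is generated by `(1,1), (1,−1)`. -/
theorem stmt4 (p : ℕ) (hp : 0 < p) :
    (1 < p →
      (extendedLorentzCone1 p =
        coneGen (Fin.append ![(onesVec p, (1:ℝ)), (onesVec p, (-1:ℝ))]
          (fun i : Fin p => (EuclideanSpace.single i (1:ℝ), (0:ℝ)))) ∧
      ∀ k : ℕ, k < p + 2 → ∀ w : Fin k → EuclideanSpace ℝ (Fin p) × ℝ,
        extendedLorentzCone1 p ≠ coneGen w)) ∧
    (p = 1 →
      extendedLorentzCone1 p = coneGen ![(onesVec p, (1:ℝ)), (onesVec p, (-1:ℝ))]) := by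
  constructor
  · intro hp1
    constructor
    · exact Set.Subset.antisymm (Stmt4Aux.L_subset_coneGen hp)
        (Stmt4Aux.coneGen_subset_L Stmt4Aux.G_mem_L)
    · intro k hk w heq
      exact Stmt4Aux.not_gen hp1 k hk w heq
  · intro hp1
    subst hp1
    exact Stmt4Aux.pone
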